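/- Let N ∈ ℕ with N ≥ 1, let n ∈ {0, …, N−1}, and let a, α, β be real numbers; set b = a + N. Assume (a+b+1|q)_{N−n−1} (2a−β+1|q)_{N−n−1} (a−b−α+1|q)_{N−n−1} ≠ 0. Then Σ_{s=0}^{N−n−1} [(2a+n+1|q)_s (n+β+1|q)_s (n+a+α+b+1|q)_s (n+1−N|q)_s / ((1|q)_s (a+b+1|q)_s (2a−β+1|q)_s (a−b−α+1|q)_s)] · [2s+2a+n+1]_q = [2a+n+1]_q · (2a+n+2|q)_{N−n−1} (a−b−α−β−n|q)_{N−n−1} / ((2a−β+1|q)_{N−n−1} (a−b−α+1|q)_{N−n−1}). -/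

import Mathlib

open Finset

/-- The symmetric q-number `[s]_q = (q^{s/2} - q^{-s/2})/(q^{1/2} - q^{-1/2})`. -/
noncomputable def qnum (q s : ℝ) : ℝ :=
  (q ^ (s / 2) - q ^ (-s / 2)) / (q ^ ((1 : ℝ) / 2) - q ^ (-(1 : ℝ) / 2))

/-- The symmetric q-factorial `[n]_q! = ∏_{m=1}^n [m]_q`. -/
noncomputable def qfact (q : ℝ) (n : ℕ) : ℝ :=
  ∏ m ∈ Finset.range n, qnum q ((m : ℝ) + 1)

/-- The symmetric q-Pochhammer symbol `(a|q)_k = ∏_{m=0}^{k-1} [a+m]_q`. -/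
noncomputable def qpoch (q a : ℝ) (k : ℕ) : ℝ :=
  ∏ m ∈ Finset.range k, qnum q (a + (m : ℝ))

/-- The q-Racah polynomial `u_n^{α,β}(x(s),a,b)_q` on the lattice `x(s)=[s]_q[s+1]_q`. -/
noncomputable def racahU (q a b α β : ℝ) (n : ℕ) (s : ℝ) : ℝ :=
  qpoch q (a - b + 1) n * qpoch q (β + 1) n * qpoch q (a + b + α + 1) n / qfact q n *
    ∑ k ∈ Finset.range (n + 1),
      qpoch q (-(n : ℝ)) k * qpoch q (α + β + (n : ℝ) + 1) k * qpoch q (a - s) k *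
          qpoch q (a + s + 1) k /
        (qpoch q 1 k * qpoch q (a - b + 1) k * qpoch q (β + 1) k *
          qpoch q (a + b + α + 1) k)

/-- The alternative q-Racah polynomial `ũ_n^{α,β}(x(s),a,b)_q`. -/
noncomputable def racahUt (q a b α β : ℝ) (n : ℕ) (s : ℝ) : ℝ :=
  qpoch q (a - b + 1) n * qpoch q (2 * a - β + 1) n * qpoch q (a - b - α + 1) n / qfact q n *
    ∑ k ∈ Finset.range (n + 1),
      qpoch q (-(n : ℝ)) k * qpoch q (2 * a - 2 * b - α - β + (n : ℝ) + 1) k *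
          qpoch q (a - s) k * qpoch q (a + s + 1) k /
        (qpoch q 1 k * qpoch q (a - b + 1) k * qpoch q (2 * a - β + 1) k *
          qpoch q (a - b - α + 1) k)

/-- `σ(s) = [s-a]_q [s+b]_q [s+a-β]_q [b+α-s]_q`. -/
noncomputable def racahSigma (q a b α β s : ℝ) : ℝ :=
  qnum q (s - a) * qnum q (s + b) * qnum q (s + a - β) * qnum q (b + α - s)

/-- `σ(-s-1) = [s+a+1]_q [b-s-1]_q [s-a+β+1]_q [b+α+s+1]_q`. -/
noncomputable def racahSigmaM (q a b α β s : ℝ) : ℝ :=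
  qnum q (s + a + 1) * qnum q (b - s - 1) * qnum q (s - a + β + 1) * qnum q (b + α + s + 1)

/-- `σ̃(s) = [s-a]_q [s+b]_q [s-a+β]_q [b+α+s]_q`. -/
noncomputable def racahSigmaT (q a b α β s : ℝ) : ℝ :=
  qnum q (s - a) * qnum q (s + b) * qnum q (s - a + β) * qnum q (b + α + s)

/-- `σ̃(-s-1) = [s+a+1]_q [b-s-1]_q [s+a-β+1]_q [b+α-s-1]_q`. -/
noncomputable def racahSigmaTM (q a b α β s : ℝ) : ℝ :=
  qnum q (s + a + 1) * qnum q (b - s - 1) * qnum q (s + a - β + 1) * qnum q (b + α - s - 1)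

/-- `τ_n(s)` for the q-Racah polynomials. -/
noncomputable def racahTau (q a b α β : ℝ) (n : ℕ) (s : ℝ) : ℝ :=
  -qnum q (α + β + 2 * (n : ℝ) + 2) * qnum q (s + (n : ℝ) / 2) * qnum q (s + (n : ℝ) / 2 + 1) +
    qnum q (a + (n : ℝ) / 2 + 1) * qnum q (b - (n : ℝ) / 2 - 1) *
      qnum q (β + (n : ℝ) / 2 + 1 - a) * qnum q (b + α + (n : ℝ) / 2 + 1) -
    qnum q (a + (n : ℝ) / 2) * qnum q (b - (n : ℝ) / 2) * qnum q (β + (n : ℝ) / 2 - a) *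
      qnum q (b + α + (n : ℝ) / 2)

noncomputable def Ee (q x : ℝ) : ℝ := q ^ (x / 2)

section basics
variable {q : ℝ}

lemma Ee_add (hq0 : 0 < q) (x y : ℝ) : Ee q (x + y) = Ee q x * Ee q y := by
  rw [Ee, Ee, Ee, add_div, Real.rpow_add hq0]

lemma Ee_pos (hq0 : 0 < q) (x : ℝ) : 0 < Ee q x := Real.rpow_pos_of_pos hq0 _

lemma Ee_ne (hq0 : 0 < q) (x : ℝ) : Ee q x ≠ 0 := (Ee_pos hq0 x).ne'

lemma Ee_zero : Ee q 0 = 1 := by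
  rw [Ee]; norm_num

lemma Ee_neg (hq0 : 0 < q) (x : ℝ) : Ee q (-x) = (Ee q x)⁻¹ := by
  rw [Ee, Ee, neg_div, Real.rpow_neg hq0.le]

lemma Ee_two (hq0 : 0 < q) : Ee q 2 = q := by
  rw [Ee]; norm_num

lemma qnum_eq (x : ℝ) : qnum q x = (Ee q x - Ee q (-x)) / (Ee q 1 - Ee q (-1)) := rfl

lemma Ee_one_ne_inv (hq0 : 0 < q) (hq1 : q ≠ 1) : Ee q 1 - Ee q (-1) ≠ 0 := by
  intro h
  apply hq1
  have h1 : Ee q 1 = Ee q (-1) := by linarith [sub_eq_zero.mp h]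
  have h2 : Ee q 1 * Ee q (-1) = 1 := by
    rw [← Ee_add hq0]; norm_num [Ee_zero]
  have h3 : Ee q 1 * Ee q 1 = q := by
    rw [← Ee_add hq0]; norm_num [Ee_two hq0]
  calc q = Ee q 1 * Ee q 1 := h3.symm
    _ = Ee q 1 * Ee q (-1) := by rw [h1]
    _ = 1 := h2

lemma qnum_zero : qnum q 0 = 0 := by
  simp [qnum]

lemma qnum_ne_zero (hq0 : 0 < q) (hq1 : q ≠ 1) {x : ℝ} (hx : x ≠ 0) : qnum q x ≠ 0 := by
  rw [qnum_eq]
  apply div_ne_zero _ (Ee_one_ne_inv hq0 hq1)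
  rw [sub_ne_zero]
  intro h
  apply hx
  have h2 : Ee q x * Ee q x = Ee q (-x) * Ee q x := by rw [h]
  rw [← Ee_add hq0, ← Ee_add hq0, neg_add_cancel, Ee_zero] at h2
  -- h2 : Ee q (x + x) = 1
  have := Real.log_rpow hq0 ((x+x)/2)
  rw [show Ee q (x+x) = q ^ ((x+x)/2) from rfl] at h2
  rw [h2, Real.log_one] at this
  have hlq : Real.log q ≠ 0 := Real.log_ne_zero_of_pos_of_ne_one hq0 hq1
  have : (x + x) / 2 = 0 := by
    rcases mul_eq_zero.mp this.symm with h' | h'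
    · linarith
    · exact absurd h' hlq
  linarith

lemma qnum_neg (x : ℝ) : qnum q (-x) = -qnum q x := by
  rw [qnum, qnum, neg_neg]
  ring

lemma qnum_natsucc_ne (hq0 : 0 < q) (hq1 : q ≠ 1) (k : ℕ) : qnum q ((k : ℝ) + 1) ≠ 0 :=
  qnum_ne_zero hq0 hq1 (by positivity)

lemma qpoch_succ (x : ℝ) (k : ℕ) :
    qpoch q x (k + 1) = qpoch q x k * qnum q (x + k) := Finset.prod_range_succ _ _

lemma qpoch_succ' (x : ℝ) (k : ℕ) :
    qpoch q x (k + 1) = qnum q x * qpoch q (x + 1) k := by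
  rw [qpoch, Finset.prod_range_succ', qpoch]
  rw [mul_comm]
  congr 1
  · norm_num
  · exact Finset.prod_congr rfl fun i _ => congrArg (qnum q) (by push_cast; ring)

lemma qpoch_add (x : ℝ) (i j : ℕ) :
    qpoch q x (i + j) = qpoch q x i * qpoch q (x + i) j := by
  rw [qpoch, Finset.prod_range_add, qpoch, qpoch]
  congr 1
  exact Finset.prod_congr rfl fun m _ => congrArg (qnum q) (by push_cast; ring)

lemma qpoch_zero (x : ℝ) : qpoch q x 0 = 1 := Finset.prod_range_zero _

lemma qpoch_neg_nat_eq_zero (M k : ℕ) (h : M < k) : qpoch q (-(M : ℝ)) k = 0 :=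
  Finset.prod_eq_zero (Finset.mem_range.mpr h)
    (by rw [neg_add_cancel]; exact qnum_zero)

lemma qpoch_factor_ne_zero {x : ℝ} {M : ℕ} (h : qpoch q x M ≠ 0) {s : ℕ} (hs : s ≤ M) :
    qpoch q x s ≠ 0 := by
  obtain ⟨j, rfl⟩ := Nat.exists_eq_add_of_le hs
  rw [qpoch_add] at h
  exact left_ne_zero_of_mul h

lemma qpoch_one_ne_zero (hq0 : 0 < q) (hq1 : q ≠ 1) (M : ℕ) : qpoch q 1 M ≠ 0 := by
  rw [qpoch]
  apply Finset.prod_ne_zero_iff.mpr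
  intro m _
  exact qnum_ne_zero hq0 hq1 (by positivity)

end basics

section core
variable {q : ℝ}

set_option maxHeartbeats 2000000 in
lemma qnum_local (hq0 : 0 < q) (hq1 : q ≠ 1) (A B C S M : ℝ) :
    qnum q (M+1) * qnum q (A-B+(M+1)) * qnum q (A-C+(M+1)) * qnum q (A+2*S)
      + qnum q (A-B-C+(M+1)) * qnum q (A+2*S) * qnum q (S-(M+1)) * qnum q (A+(M+1)+S)
    = qnum q S * qnum q (A-B+S) * qnum q (A-C+S) * qnum q (A+(M+1)+S)
      - qnum q (A+S) * qnum q (B+S) * qnum q (C+S) * qnum q (S-(M+1)) := by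
  simp only [qnum_eq, div_mul_div_comm, ← add_div, ← sub_div]
  congr 1
  rw [show A-B-C+(M+1) = A + -B + -C + (M+1) from by ring]
  rw [show A-B+(M+1) = A + -B + (M+1) from by ring]
  rw [show A-C+(M+1) = A + -C + (M+1) from by ring]
  rw [show A+2*S = A + (S+S) from by ring]
  rw [show S-(M+1) = S + -(M+1) from by ring]
  rw [show A-B+S = A + -B + S from by ring]
  rw [show A-C+S = A + -C + S from by ring]
  simp only [neg_add_rev, neg_neg]
  simp only [Ee_add hq0, Ee_neg hq0, mul_inv]
  have hA := Ee_ne hq0 A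
  have hB := Ee_ne hq0 B
  have hC := Ee_ne hq0 C
  have hS := Ee_ne hq0 S
  have hM := Ee_ne hq0 M
  have h1 := Ee_ne hq0 1
  field_simp
  ring
end core

noncomputable def UU (q A B C : ℝ) (K s : ℕ) : ℝ :=
  qpoch q A s * qpoch q B s * qpoch q C s * qpoch q (-(K : ℝ)) s *
    (qpoch q ((s : ℝ) + 1) (K - s) * qpoch q (A - B + 1 + (s : ℝ)) (K - s) *
      qpoch q (A - C + 1 + (s : ℝ)) (K - s) * qpoch q (A + (K : ℝ) + 1 + (s : ℝ)) (K - s))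

noncomputable def TT (q A B C : ℝ) (K s : ℕ) : ℝ := UU q A B C K s * qnum q (A + 2 * (s : ℝ))

noncomputable def GG (q A B C : ℝ) (M s : ℕ) : ℝ :=
  qnum q (s : ℝ) * qnum q (A - B + (s : ℝ)) * qnum q (A - C + (s : ℝ)) *
    qnum q (A + ((M : ℝ) + 1) + (s : ℝ)) * UU q A B C (M + 1) s

noncomputable def SS (q A B C : ℝ) (M : ℕ) : ℝ := ∑ s ∈ Finset.range (M + 1), TT q A B C M s

noncomputable def RR (q A B C : ℝ) (M : ℕ) : ℝ :=
  qnum q A * qpoch q (A + 1) M * qpoch q (A - B - C + 1) M * qpoch q 1 M *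
    qpoch q (A + (M : ℝ) + 1) M

section shifts
variable {q : ℝ} (A B C : ℝ)

lemma UUshift (M s : ℕ) (hs : s ≤ M) :
    qnum q ((s:ℝ) - ((M:ℝ)+1)) * qnum q (A + ((M:ℝ)+1) + (s:ℝ)) * UU q A B C (M+1) s
    = -(qnum q ((M:ℝ)+1) * qnum q ((M:ℝ)+1) * qnum q (A-B+((M:ℝ)+1)) * qnum q (A-C+((M:ℝ)+1)) *
        qnum q (A+2*(M:ℝ)+1) * qnum q (A+2*(M:ℝ)+2) * UU q A B C M s) := by
  have hc : ((M+1 : ℕ) : ℝ) = (M:ℝ)+1 := by push_cast; ring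
  have hl : M+1-s = (M-s)+1 := by omega
  have e1 : qpoch q ((s:ℝ)+1) (M+1-s) = qpoch q ((s:ℝ)+1) (M-s) * qnum q ((M:ℝ)+1) := by
    rw [hl, qpoch_succ]; congr 1
    exact congrArg (qnum q) (by rw [Nat.cast_sub hs]; ring)
  have e2 : qpoch q (A-B+1+(s:ℝ)) (M+1-s)
      = qpoch q (A-B+1+(s:ℝ)) (M-s) * qnum q (A-B+((M:ℝ)+1)) := by
    rw [hl, qpoch_succ]; congr 1
    exact congrArg (qnum q) (by rw [Nat.cast_sub hs]; ring)
  have e3 : qpoch q (A-C+1+(s:ℝ)) (M+1-s)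
      = qpoch q (A-C+1+(s:ℝ)) (M-s) * qnum q (A-C+((M:ℝ)+1)) := by
    rw [hl, qpoch_succ]; congr 1
    exact congrArg (qnum q) (by rw [Nat.cast_sub hs]; ring)
  have e4 : qpoch q (A+((M:ℝ)+1)+1+(s:ℝ)) (M+1-s)
      = qpoch q (A+(M:ℝ)+2+(s:ℝ)) (M-s) * qnum q (A+2*(M:ℝ)+2) := by
    rw [hl, show A+((M:ℝ)+1)+1+(s:ℝ) = A+(M:ℝ)+2+(s:ℝ) from by ring, qpoch_succ]; congr 1
    exact congrArg (qnum q) (by rw [Nat.cast_sub hs]; ring)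
  have h4 : qpoch q (-((M:ℝ)+1)) s * qnum q ((s:ℝ)-((M:ℝ)+1))
      = -(qnum q ((M:ℝ)+1) * qpoch q (-(M:ℝ)) s) := by
    have t1 : qpoch q (-((M:ℝ)+1)) (s+1)
        = qpoch q (-((M:ℝ)+1)) s * qnum q ((s:ℝ)-((M:ℝ)+1)) := by
      rw [qpoch_succ]; congr 1; exact congrArg (qnum q) (by ring)
    have t2 : qpoch q (-((M:ℝ)+1)) (s+1) = qnum q (-((M:ℝ)+1)) * qpoch q (-(M:ℝ)) s := by
      rw [qpoch_succ']; congr 1; exact congrArg (fun x => qpoch q x s) (by ring)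
    rw [← t1, t2, qnum_neg]; ring
  have h5 : qnum q (A+((M:ℝ)+1)+(s:ℝ)) * qpoch q (A+(M:ℝ)+2+(s:ℝ)) (M-s)
      = qpoch q (A+(M:ℝ)+1+(s:ℝ)) (M-s) * qnum q (A+2*(M:ℝ)+1) := by
    have t1 : qpoch q (A+(M:ℝ)+1+(s:ℝ)) ((M-s)+1)
        = qnum q (A+((M:ℝ)+1)+(s:ℝ)) * qpoch q (A+(M:ℝ)+2+(s:ℝ)) (M-s) := by
      rw [qpoch_succ']; congr 1
      · exact congrArg (qnum q) (by ring)
      · exact congrArg (fun x => qpoch q x (M-s)) (by ring)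
    have t2 : qpoch q (A+(M:ℝ)+1+(s:ℝ)) ((M-s)+1)
        = qpoch q (A+(M:ℝ)+1+(s:ℝ)) (M-s) * qnum q (A+2*(M:ℝ)+1) := by
      rw [qpoch_succ]; congr 1
      exact congrArg (qnum q) (by rw [Nat.cast_sub hs]; ring)
    exact t1.symm.trans t2
  simp only [UU, hc]
  rw [e1, e2, e3, e4]
  linear_combination
    ((qpoch q A s * qpoch q B s * qpoch q C s *
        (qpoch q ((s:ℝ)+1) (M-s) * qpoch q (A-B+1+(s:ℝ)) (M-s) * qpoch q (A-C+1+(s:ℝ)) (M-s)) *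
        qnum q ((M:ℝ)+1) * qnum q (A-B+((M:ℝ)+1)) * qnum q (A-C+((M:ℝ)+1)) *
        qnum q (A+2*(M:ℝ)+2)) *
      (qnum q (A+((M:ℝ)+1)+(s:ℝ)) * qpoch q (A+(M:ℝ)+2+(s:ℝ)) (M-s))) * h4 +
    ((qpoch q A s * qpoch q B s * qpoch q C s *
        (qpoch q ((s:ℝ)+1) (M-s) * qpoch q (A-B+1+(s:ℝ)) (M-s) * qpoch q (A-C+1+(s:ℝ)) (M-s)) *
        qnum q ((M:ℝ)+1) * qnum q (A-B+((M:ℝ)+1)) * qnum q (A-C+((M:ℝ)+1)) *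
        qnum q (A+2*(M:ℝ)+2)) *
      (-(qnum q ((M:ℝ)+1) * qpoch q (-(M:ℝ)) s))) * h5

lemma UUnext (M s : ℕ) (hs : s ≤ M) :
    qnum q ((s:ℝ)+1) * qnum q (A-B+1+(s:ℝ)) * qnum q (A-C+1+(s:ℝ)) * qnum q (A+(M:ℝ)+2+(s:ℝ)) *
      UU q A B C (M+1) (s+1)
    = qnum q (A+(s:ℝ)) * qnum q (B+(s:ℝ)) * qnum q (C+(s:ℝ)) * qnum q ((s:ℝ)-((M:ℝ)+1)) *
      UU q A B C (M+1) s := by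
  have hc : ((M+1 : ℕ) : ℝ) = (M:ℝ)+1 := by push_cast; ring
  have hc2 : ((s+1 : ℕ) : ℝ) = (s:ℝ)+1 := by push_cast; ring
  simp only [UU, hc, hc2]
  simp only [qpoch_succ]
  rw [show M+1-(s+1) = M-s from by omega, show M+1-s = (M-s)+1 from by omega]
  simp only [qpoch_succ']
  rw [show -((M:ℝ)+1)+(s:ℝ) = (s:ℝ)-((M:ℝ)+1) from by ring]
  rw [show A-B+1+((s:ℝ)+1) = A-B+1+(s:ℝ)+1 from by ring]
  rw [show A-C+1+((s:ℝ)+1) = A-C+1+(s:ℝ)+1 from by ring]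
  rw [show A+((M:ℝ)+1)+1+((s:ℝ)+1) = A+((M:ℝ)+1)+1+(s:ℝ)+1 from by ring]
  rw [show A+((M:ℝ)+1)+1+(s:ℝ) = A+(M:ℝ)+2+(s:ℝ) from by ring]
  ring

lemma TT_top (M : ℕ) : TT q A B C M (M+1) = 0 := by
  simp only [TT, UU]
  rw [qpoch_neg_nat_eq_zero M (M+1) (by omega)]
  ring

lemma GG_zero (M : ℕ) : GG q A B C M 0 = 0 := by
  simp [GG, qnum_zero]

lemma GG_top (M : ℕ) : GG q A B C M (M+2) = 0 := by
  simp only [GG, UU]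
  rw [qpoch_neg_nat_eq_zero (M+1) (M+2) (by omega)]
  ring

end shifts

section steps
variable {q : ℝ}

lemma step_local (hq0 : 0 < q) (hq1 : q ≠ 1) (A B C : ℝ) (M s : ℕ) (hs : s ≤ M+1) :
    qnum q ((M:ℝ)+1) * qnum q (A-B+((M:ℝ)+1)) * qnum q (A-C+((M:ℝ)+1)) *
      (TT q A B C (M+1) s -
        qnum q ((M:ℝ)+1) * qnum q (A-B-C+((M:ℝ)+1)) * qnum q (A+2*(M:ℝ)+1) *
          qnum q (A+2*(M:ℝ)+2) * TT q A B C M s)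
    = GG q A B C M s - GG q A B C M (s+1) := by
  rcases Nat.lt_or_ge s (M+1) with h | h
  · have h' : s ≤ M := by omega
    have hL := qnum_local hq0 hq1 A B C (s:ℝ) (M:ℝ)
    have hsh := UUshift (q := q) A B C M s h'
    have hnx := UUnext (q := q) A B C M s h'
    have hG : GG q A B C M (s+1)
        = qnum q ((s:ℝ)+1) * qnum q (A-B+1+(s:ℝ)) * qnum q (A-C+1+(s:ℝ)) *
          qnum q (A+(M:ℝ)+2+(s:ℝ)) * UU q A B C (M+1) (s+1) := by
      simp only [GG]
      rw [show ((s+1:ℕ):ℝ) = (s:ℝ)+1 from by push_cast; ring]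
      rw [show A-B+((s:ℝ)+1) = A-B+1+(s:ℝ) from by ring]
      rw [show A-C+((s:ℝ)+1) = A-C+1+(s:ℝ) from by ring]
      rw [show A+((M:ℝ)+1)+((s:ℝ)+1) = A+(M:ℝ)+2+(s:ℝ) from by ring]
    rw [hG]
    simp only [TT, GG]
    linear_combination (UU q A B C (M+1) s) * hL -
      (qnum q (A-B-C+((M:ℝ)+1)) * qnum q (A+2*(s:ℝ))) * hsh + hnx
  · have hse : s = M+1 := by omega
    subst hse
    rw [TT_top, show M+1+1 = M+2 from rfl, GG_top]
    simp only [TT, GG]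
    rw [show ((M+1:ℕ):ℝ) = (M:ℝ)+1 from by push_cast; ring]
    rw [show A+2*((M:ℝ)+1) = A+((M:ℝ)+1)+((M:ℝ)+1) from by ring]
    ring

lemma recur (hq0 : 0 < q) (hq1 : q ≠ 1) (A B C : ℝ) (M : ℕ) :
    qnum q ((M:ℝ)+1) * qnum q (A-B+((M:ℝ)+1)) * qnum q (A-C+((M:ℝ)+1)) *
      (SS q A B C (M+1) -
        qnum q ((M:ℝ)+1) * qnum q (A-B-C+((M:ℝ)+1)) * qnum q (A+2*(M:ℝ)+1) *
          qnum q (A+2*(M:ℝ)+2) * SS q A B C M) = 0 := by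
  have hSM : ∑ s ∈ Finset.range (M+2), TT q A B C M s = SS q A B C M := by
    rw [show M+2 = (M+1)+1 from rfl, Finset.sum_range_succ, TT_top, add_zero]
    rfl
  have h1 : SS q A B C (M+1) -
      qnum q ((M:ℝ)+1) * qnum q (A-B-C+((M:ℝ)+1)) * qnum q (A+2*(M:ℝ)+1) *
        qnum q (A+2*(M:ℝ)+2) * SS q A B C M
      = ∑ s ∈ Finset.range (M+2), (TT q A B C (M+1) s -
          qnum q ((M:ℝ)+1) * qnum q (A-B-C+((M:ℝ)+1)) * qnum q (A+2*(M:ℝ)+1) *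
            qnum q (A+2*(M:ℝ)+2) * TT q A B C M s) := by
    rw [Finset.sum_sub_distrib, ← Finset.mul_sum, hSM]
    rfl
  rw [h1, Finset.mul_sum]
  rw [Finset.sum_congr rfl fun s hs =>
    step_local hq0 hq1 A B C M s (by have := Finset.mem_range.mp hs; omega)]
  rw [Finset.sum_range_sub' (GG q A B C M) (M+2), GG_zero, GG_top, sub_zero]

lemma key_gen (hq0 : 0 < q) (hq1 : q ≠ 1) (M : ℕ) : ∀ (A B C : ℝ),
    (∀ k : ℕ, A + ((k:ℝ)+1) ≠ 0) → (∀ k : ℕ, A - B + ((k:ℝ)+1) ≠ 0) →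
    (∀ k : ℕ, A - C + ((k:ℝ)+1) ≠ 0) →
    SS q A B C M = RR q A B C M := by
  induction M with
  | zero =>
    intro A B C _ _ _
    simp [SS, RR, TT, UU, qpoch_zero]
  | succ M ih =>
    intro A B C hA hAB hAC
    have hM1 : qnum q ((M:ℝ)+1) ≠ 0 := qnum_ne_zero hq0 hq1 (by positivity)
    have hAB' : qnum q (A-B+((M:ℝ)+1)) ≠ 0 := qnum_ne_zero hq0 hq1 (hAB M)
    have hAC' : qnum q (A-C+((M:ℝ)+1)) ≠ 0 := qnum_ne_zero hq0 hq1 (hAC M)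
    have hA' : qnum q (A+((M:ℝ)+1)) ≠ 0 := qnum_ne_zero hq0 hq1 (hA M)
    have h0 := recur hq0 hq1 A B C M
    have hrec : SS q A B C (M+1)
        = qnum q ((M:ℝ)+1) * qnum q (A-B-C+((M:ℝ)+1)) * qnum q (A+2*(M:ℝ)+1) *
            qnum q (A+2*(M:ℝ)+2) * SS q A B C M := by
      rcases mul_eq_zero.mp h0 with h | h
      · exact absurd h (mul_ne_zero (mul_ne_zero hM1 hAB') hAC')
      · exact sub_eq_zero.mp h
    rw [hrec, ih A B C hA hAB hAC]
    have hc : ((M+1:ℕ):ℝ) = (M:ℝ)+1 := by push_cast; ring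
    have h6 : qnum q (A+((M:ℝ)+1)) * qpoch q (A+((M:ℝ)+1)+1) (M+1)
        = qpoch q (A+(M:ℝ)+1) M * qnum q (A+2*(M:ℝ)+1) * qnum q (A+2*(M:ℝ)+2) := by
      have t1 : qpoch q (A+(M:ℝ)+1) (M+2)
          = qnum q (A+((M:ℝ)+1)) * qpoch q (A+((M:ℝ)+1)+1) (M+1) := by
        rw [show M+2 = (M+1)+1 from rfl, qpoch_succ']
        congr 1
        · exact congrArg (qnum q) (by ring)
        · exact congrArg (fun x => qpoch q x (M+1)) (by ring)
      have t2 : qpoch q (A+(M:ℝ)+1) (M+2)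
          = qpoch q (A+(M:ℝ)+1) M * qnum q (A+2*(M:ℝ)+1) * qnum q (A+2*(M:ℝ)+2) := by
        rw [show M+2 = (M+1)+1 from rfl, qpoch_succ, qpoch_succ]
        congr 1
        · congr 1
          exact congrArg (qnum q) (by ring)
        · exact congrArg (qnum q) (by rw [hc]; ring)
      exact t1.symm.trans t2
    have key : qnum q (A+((M:ℝ)+1)) * RR q A B C (M+1)
        = qnum q (A+((M:ℝ)+1)) *
          (qnum q ((M:ℝ)+1) * qnum q (A-B-C+((M:ℝ)+1)) * qnum q (A+2*(M:ℝ)+1) *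
            qnum q (A+2*(M:ℝ)+2) * RR q A B C M) := by
      simp only [RR, hc]
      rw [qpoch_succ (q := q) (A+1) M, qpoch_succ (q := q) (A-B-C+1) M,
        qpoch_succ (q := q) 1 M]
      rw [show A+1+(M:ℝ) = A+((M:ℝ)+1) from by ring]
      rw [show A-B-C+1+(M:ℝ) = A-B-C+((M:ℝ)+1) from by ring]
      rw [show (1:ℝ)+(M:ℝ) = (M:ℝ)+1 from by ring]
      linear_combination (qnum q A * qpoch q (A+1) M * qnum q (A+((M:ℝ)+1)) *
        qpoch q (A-B-C+1) M * qnum q (A-B-C+((M:ℝ)+1)) * qpoch q 1 M *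
        qnum q ((M:ℝ)+1)) * h6
    exact (mul_left_cancel₀ hA' key).symm

end steps

section cont
variable {q : ℝ}

lemma qnum_continuous (hq0 : 0 < q) : Continuous (qnum q) := by
  have h : (qnum q) = fun s : ℝ =>
      (Real.exp (Real.log q * (s/2)) - Real.exp (Real.log q * (-s/2))) /
        (q ^ ((1:ℝ)/2) - q ^ (-(1:ℝ)/2)) := by
    funext s
    rw [qnum, Real.rpow_def_of_pos hq0, Real.rpow_def_of_pos hq0]
  rw [h]
  fun_prop

lemma qpoch_continuous (hq0 : 0 < q) {f : ℝ → ℝ} (hf : Continuous f) (k : ℕ) :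
    Continuous fun x => qpoch q (f x) k := by
  simp only [qpoch]
  exact continuous_finset_prod _ fun m _ =>
    (qnum_continuous hq0).comp (hf.add continuous_const)

lemma SS_continuous (hq0 : 0 < q) {fA fB fC : ℝ → ℝ}
    (hfA : Continuous fA) (hfB : Continuous fB) (hfC : Continuous fC) (M : ℕ) :
    Continuous fun x => SS q (fA x) (fB x) (fC x) M := by
  simp only [SS, TT, UU]
  refine continuous_finset_sum _ fun s _ => ?_
  refine Continuous.mul ?_ ((qnum_continuous hq0).comp (hfA.add continuous_const))
  refine Continuous.mul ?_ ?_
  · exact (((qpoch_continuous hq0 hfA s).mul (qpoch_continuous hq0 hfB s)).mul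
      (qpoch_continuous hq0 hfC s)).mul continuous_const
  · refine Continuous.mul (Continuous.mul (Continuous.mul continuous_const ?_) ?_) ?_
    · exact qpoch_continuous hq0 (((hfA.sub hfB).add continuous_const).add continuous_const) _
    · exact qpoch_continuous hq0 (((hfA.sub hfC).add continuous_const).add continuous_const) _
    · exact qpoch_continuous hq0 (((hfA.add continuous_const).add continuous_const).add
        continuous_const) _

lemma RR_continuous (hq0 : 0 < q) {fA fB fC : ℝ → ℝ}
    (hfA : Continuous fA) (hfB : Continuous fB) (hfC : Continuous fC) (M : ℕ) :
    Continuous fun x => RR q (fA x) (fB x) (fC x) M := by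
  simp only [RR]
  refine ((((qnum_continuous hq0).comp hfA).mul
    (qpoch_continuous hq0 (hfA.add continuous_const) M)).mul
    (qpoch_continuous hq0 (((hfA.sub hfB).sub hfC).add continuous_const) M)).mul
    continuous_const |>.mul
    (qpoch_continuous hq0 ((hfA.add continuous_const).add continuous_const) M)

lemma dense_avoid (v : ℕ → ℝ) : Dense {x : ℝ | ∀ k : ℕ, x ≠ v k} := by
  have hc : (Set.range v).Countable := Set.countable_range v
  have hd := hc.dense_compl ℝ
  have hset : {x : ℝ | ∀ k : ℕ, x ≠ v k} = (Set.range v)ᶜ := by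
    ext x
    simp only [Set.mem_setOf_eq, Set.mem_compl_iff, Set.mem_range, not_exists]
    exact ⟨fun h k hk => h k hk.symm, fun h k hk => h k hk.symm⟩
  rw [hset]
  exact hd

lemma extend_zero (f : ℝ → ℝ) (hf : Continuous f) (v : ℕ → ℝ)
    (hv : ∀ x, (∀ k : ℕ, x ≠ v k) → f x = 0) (x : ℝ) : f x = 0 := by
  have h := Continuous.ext_on (dense_avoid v) hf continuous_const
    (fun y hy => hv y hy)
  exact congrFun h x

lemma key_all (hq0 : 0 < q) (hq1 : q ≠ 1) (M : ℕ) (A B C : ℝ) :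
    SS q A B C M = RR q A B C M := by
  have st1 : ∀ A B C : ℝ, (∀ k : ℕ, A + ((k:ℝ)+1) ≠ 0) →
      (∀ k : ℕ, A - B + ((k:ℝ)+1) ≠ 0) → SS q A B C M = RR q A B C M := by
    intro A B C hA hAB
    have h := extend_zero (fun x => SS q A B x M - RR q A B x M)
      ((SS_continuous hq0 continuous_const continuous_const continuous_id M).sub
        (RR_continuous hq0 continuous_const continuous_const continuous_id M))
      (fun k => A + ((k:ℝ)+1))
      (fun x hx => sub_eq_zero.mpr (key_gen hq0 hq1 M A B x hA hAB
        (fun k h' => hx k (show x = A + ((k:ℝ)+1) by linarith)))) C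
    exact sub_eq_zero.mp h
  have st2 : ∀ A B C : ℝ, (∀ k : ℕ, A + ((k:ℝ)+1) ≠ 0) →
      SS q A B C M = RR q A B C M := by
    intro A B C hA
    have h := extend_zero (fun x => SS q A x C M - RR q A x C M)
      ((SS_continuous hq0 continuous_const continuous_id continuous_const M).sub
        (RR_continuous hq0 continuous_const continuous_id continuous_const M))
      (fun k => A + ((k:ℝ)+1))
      (fun x hx => sub_eq_zero.mpr (st1 A x C hA
        (fun k h' => hx k (show x = A + ((k:ℝ)+1) by linarith)))) B
    exact sub_eq_zero.mp h
  have h := extend_zero (fun x => SS q x B C M - RR q x B C M)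
    ((SS_continuous hq0 continuous_id continuous_const continuous_const M).sub
      (RR_continuous hq0 continuous_id continuous_const continuous_const M))
    (fun k => -((k:ℝ)+1))
    (fun x hx => sub_eq_zero.mpr (st2 x B C
      (fun k h' => hx k (show x = -((k:ℝ)+1) by linarith)))) A
  exact sub_eq_zero.mp h

end cont

theorem stmt_8 (q : ℝ) (hq0 : 0 < q) (hq1 : q ≠ 1) (N : ℕ) (hN : 1 ≤ N) (n : ℕ) (hn : n < N)
    (a α β : ℝ)
    (hnz : qpoch q (a + (a + N) + 1) (N - n - 1) * qpoch q (2 * a - β + 1) (N - n - 1) *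
      qpoch q (a - (a + N) - α + 1) (N - n - 1) ≠ 0) :
    ∑ s ∈ Finset.range (N - n),
        qpoch q (2 * a + (n : ℝ) + 1) s * qpoch q ((n : ℝ) + β + 1) s *
            qpoch q ((n : ℝ) + a + α + (a + N) + 1) s * qpoch q ((n : ℝ) + 1 - N) s /
            (qpoch q 1 s * qpoch q (a + (a + N) + 1) s * qpoch q (2 * a - β + 1) s *
              qpoch q (a - (a + N) - α + 1) s) *
          qnum q (2 * (s : ℝ) + 2 * a + (n : ℝ) + 1) =
      qnum q (2 * a + (n : ℝ) + 1) *
        (qpoch q (2 * a + (n : ℝ) + 2) (N - n - 1) *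
            qpoch q (a - (a + N) - α - β - (n : ℝ)) (N - n - 1) /
          (qpoch q (2 * a - β + 1) (N - n - 1) * qpoch q (a - (a + N) - α + 1) (N - n - 1))) := by
  set M := N - n - 1 with hM
  have hNn : N - n = M + 1 := by omega
  have hcM : (M:ℝ) = (N:ℝ) - (n:ℝ) - 1 := by
    rw [hM, show N - n - 1 = N - (n+1) from by omega, Nat.cast_sub hn]
    push_cast
    ring
  set A := 2 * a + (n : ℝ) + 1 with hA
  set B := (n : ℝ) + β + 1 with hB
  set C := (n : ℝ) + a + α + (a + (N:ℝ)) + 1 with hC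
  have r1 : a + (a + (N:ℝ)) + 1 = A + (M:ℝ) + 1 := by rw [hA, hcM]; ring
  have r2 : 2 * a - β + 1 = A - B + 1 := by rw [hA, hB]; ring
  have r3 : a - (a + (N:ℝ)) - α + 1 = A - C + 1 := by rw [hA, hC]; ring
  have r4 : (n:ℝ) + 1 - (N:ℝ) = -(M:ℝ) := by rw [hcM]; ring
  have r5 : 2 * a + (n:ℝ) + 2 = A + 1 := by rw [hA]; ring
  have r6 : a - (a + (N:ℝ)) - α - β - (n:ℝ) = A - B - C + 1 := by rw [hA, hB, hC]; ring
  rw [r1, r2, r3] at hnz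
  rw [hNn, r1, r2, r3, r4, r5, r6]
  obtain ⟨⟨h2, h3⟩, h4⟩ : (qpoch q (A + (M:ℝ) + 1) M ≠ 0 ∧ qpoch q (A - B + 1) M ≠ 0) ∧
      qpoch q (A - C + 1) M ≠ 0 := by
    rw [← mul_ne_zero_iff, ← mul_ne_zero_iff]
    exact hnz
  have h1 : qpoch q 1 M ≠ 0 := qpoch_one_ne_zero hq0 hq1 M
  set D := qpoch q 1 M * qpoch q (A + (M:ℝ) + 1) M * qpoch q (A - B + 1) M *
      qpoch q (A - C + 1) M with hD
  -- splitting lemma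
  have sp : ∀ (x : ℝ) (s : ℕ), s ≤ M → qpoch q x M = qpoch q x s * qpoch q (x + (s:ℝ)) (M - s) := by
    intro x s hs
    have h := qpoch_add (q := q) x s (M - s)
    rw [show s + (M - s) = M from by omega] at h
    exact h
  have hterm : ∀ s ∈ Finset.range (M+1),
      qpoch q A s * qpoch q B s * qpoch q C s * qpoch q (-(M:ℝ)) s /
          (qpoch q 1 s * qpoch q (A + (M:ℝ) + 1) s * qpoch q (A - B + 1) s *
            qpoch q (A - C + 1) s) *
        qnum q (2 * (s : ℝ) + 2 * a + (n : ℝ) + 1)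
      = TT q A B C M s / D := by
    intro s hsmem
    have hsM : s ≤ M := by have := Finset.mem_range.mp hsmem; omega
    rw [show 2 * (s:ℝ) + 2 * a + (n:ℝ) + 1 = A + 2 * (s:ℝ) from by rw [hA]; ring]
    have hF1 : qpoch q 1 s ≠ 0 := qpoch_one_ne_zero hq0 hq1 s
    have hF2 : qpoch q (A + (M:ℝ) + 1) s ≠ 0 := qpoch_factor_ne_zero h2 hsM
    have hF3 : qpoch q (A - B + 1) s ≠ 0 := qpoch_factor_ne_zero h3 hsM
    have hF4 : qpoch q (A - C + 1) s ≠ 0 := qpoch_factor_ne_zero h4 hsM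
    have sp1 : qpoch q 1 M = qpoch q 1 s * qpoch q ((s:ℝ) + 1) (M - s) := by
      rw [sp 1 s hsM, show (1:ℝ) + (s:ℝ) = (s:ℝ) + 1 from by ring]
    have sp2 : qpoch q (A + (M:ℝ) + 1) M
        = qpoch q (A + (M:ℝ) + 1) s * qpoch q (A + (M:ℝ) + 1 + (s:ℝ)) (M - s) :=
      sp _ s hsM
    have sp3 : qpoch q (A - B + 1) M
        = qpoch q (A - B + 1) s * qpoch q (A - B + 1 + (s:ℝ)) (M - s) := sp _ s hsM
    have sp4 : qpoch q (A - C + 1) M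
        = qpoch q (A - C + 1) s * qpoch q (A - C + 1 + (s:ℝ)) (M - s) := sp _ s hsM
    have hQ1 : qpoch q ((s:ℝ) + 1) (M - s) ≠ 0 :=
      right_ne_zero_of_mul (by rw [← sp1]; exact h1)
    have hQ2 : qpoch q (A + (M:ℝ) + 1 + (s:ℝ)) (M - s) ≠ 0 :=
      right_ne_zero_of_mul (by rw [← sp2]; exact h2)
    have hQ3 : qpoch q (A - B + 1 + (s:ℝ)) (M - s) ≠ 0 :=
      right_ne_zero_of_mul (by rw [← sp3]; exact h3)
    have hQ4 : qpoch q (A - C + 1 + (s:ℝ)) (M - s) ≠ 0 :=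
      right_ne_zero_of_mul (by rw [← sp4]; exact h4)
    rw [hD, TT, UU, sp1, sp2, sp3, sp4]
    field_simp
  have hsum : ∑ s ∈ Finset.range (M+1),
      (qpoch q A s * qpoch q B s * qpoch q C s * qpoch q (-(M:ℝ)) s /
          (qpoch q 1 s * qpoch q (A + (M:ℝ) + 1) s * qpoch q (A - B + 1) s *
            qpoch q (A - C + 1) s) *
        qnum q (2 * (s : ℝ) + 2 * a + (n : ℝ) + 1))
      = ∑ s ∈ Finset.range (M+1), TT q A B C M s / D := Finset.sum_congr rfl hterm
  rw [hsum]
  rw [← Finset.sum_div]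
  have hSS : ∑ s ∈ Finset.range (M+1), TT q A B C M s = SS q A B C M := rfl
  rw [hSS, key_all hq0 hq1 M A B C, RR, hD]
  field_simp
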